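/- Let G, H, K be finite groups, X' ≤ X ≤ G×H and Y ≤ H×K subgroups, M' a left 𝕜X'-module and N a left 𝕜Y-module. There is a 𝕜[X*Y]-module homomorphism α₁ : Ind_{X'*Y}^{X*Y}(M' ⊗^{X',Y}_{𝕜H} N) → Ind_{X'}^{X}(M') ⊗^{X,Y}_{𝕜H} N sending (g,k)⊗(m'⊗n) to ((g,h)⊗m') ⊗ (h,k)n, for (g,k) ∈ X*Y, m' ∈ M', n ∈ N, where h ∈ H is chosen with (g,h) ∈ X and (h,k) ∈ Y; α₁ is natural in M' and N, and if p₂(X) ≤ p₁(Y) then α₁ is an isomorphism. -/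

import Mathlib

namespace Stmt9

/-- `k₁(X) = {g ∈ G ∣ (g,1) ∈ X}`. -/
def k1 {G H : Type*} [Group G] [Group H] (X : Subgroup (G × H)) : Subgroup G :=
  X.comap (MonoidHom.inl G H)

/-- `k₂(X) = {h ∈ H ∣ (1,h) ∈ X}`. -/
def k2 {G H : Type*} [Group G] [Group H] (X : Subgroup (G × H)) : Subgroup H :=
  X.comap (MonoidHom.inr G H)

/-- `p₁(X)`, the image of `X` under the first projection. -/
def p1 {G H : Type*} [Group G] [Group H] (X : Subgroup (G × H)) : Subgroup G :=
  X.map (MonoidHom.fst G H)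

/-- `p₂(X)`, the image of `X` under the second projection. -/
def p2 {G H : Type*} [Group G] [Group H] (X : Subgroup (G × H)) : Subgroup H :=
  X.map (MonoidHom.snd G H)

/-- The opposite subgroup `X° = {(h,g) ∣ (g,h) ∈ X}`. -/
def opp {G H : Type*} [Group G] [Group H] (X : Subgroup (G × H)) : Subgroup (H × G) :=
  X.map ((MulEquiv.prodComm : (G × H) ≃* (H × G)).toMonoidHom)

/-- The composition `X*Y` of subgroup correspondences. -/
def comp {G H K : Type*} [Group G] [Group H] [Group K]
    (X : Subgroup (G × H)) (Y : Subgroup (H × K)) : Subgroup (G × K) where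
  carrier := {gk | ∃ h : H, (gk.1, h) ∈ X ∧ (h, gk.2) ∈ Y}
  one_mem' := ⟨1, X.one_mem, Y.one_mem⟩
  mul_mem' := by
    rintro ⟨g, k⟩ ⟨g', k'⟩ ⟨h, hX, hY⟩ ⟨h', hX', hY'⟩
    exact ⟨h * h', X.mul_mem hX hX', Y.mul_mem hY hY'⟩
  inv_mem' := by
    rintro ⟨g, k⟩ ⟨h, hX, hY⟩
    exact ⟨h⁻¹, X.inv_mem hX, Y.inv_mem hY⟩

lemma mem_comp {G H K : Type*} [Group G] [Group H] [Group K]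
    {X : Subgroup (G × H)} {Y : Subgroup (H × K)} {x : G × K} :
    x ∈ comp X Y ↔ ∃ h : H, (x.1, h) ∈ X ∧ (h, x.2) ∈ Y := Iff.rfl

lemma mem_opp {G H : Type*} [Group G] [Group H] {X : Subgroup (G × H)} {x : H × G} :
    x ∈ opp X ↔ (x.2, x.1) ∈ X := by
  rw [opp, Subgroup.mem_map]
  constructor
  · rintro ⟨⟨g, h⟩, hgh, rfl⟩
    simpa using hgh
  · intro hx
    exact ⟨(x.2, x.1), hx, rfl⟩

/-- The diagonal subgroup `Δ(P) = {(g,g) ∣ g ∈ P} ≤ G × G`. -/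
def diag {G : Type*} [Group G] (P : Subgroup G) : Subgroup (G × G) :=
  (P.subtype.prod P.subtype).range

/-- The twisted diagonal subgroup `Δ(P,φ,Q) = {(φ y, y) ∣ y ∈ Q} ≤ G × H`. -/
def tdiag {G H : Type*} [Group G] [Group H] (P : Subgroup G) (Q : Subgroup H)
    (φ : Q ≃* P) : Subgroup (G × H) :=
  ((P.subtype.comp φ.toMonoidHom).prod Q.subtype).range

open scoped TensorProduct

section ExtendedTensor

variable {𝕜 : Type*} [CommRing 𝕜]

/-- The submodule of relations defining the balanced tensor product
`M ⊗_{𝕜[k₂(X)∩k₁(Y)]} N` over the middle group: it is spanned by the elements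
`(m·b) ⊗ n - m ⊗ (b·n)` with `b ∈ k₂(X)∩k₁(Y)`, where `m·b = (1,b⁻¹)·m` and
`b·n = (b,1)·n`. -/
def midRel {A B C : Type*} [Group A] [Group B] [Group C]
    {M N : Type*} [AddCommGroup M] [Module 𝕜 M] [AddCommGroup N] [Module 𝕜 N]
    (X : Subgroup (A × B)) (Y : Subgroup (B × C))
    (ρ : Representation 𝕜 ↥X M) (σ : Representation 𝕜 ↥Y N) :
    Submodule 𝕜 (M ⊗[𝕜] N) :=
  Submodule.span 𝕜 {z | ∃ (b : B) (h1 : (((1 : A), b⁻¹) : A × B) ∈ X)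
    (h2 : ((b, (1 : C)) : B × C) ∈ Y) (m : M) (n : N),
      z = (ρ ⟨((1 : A), b⁻¹), h1⟩ m) ⊗ₜ[𝕜] n - m ⊗ₜ[𝕜] (σ ⟨(b, (1 : C)), h2⟩ n)}

/-- The underlying `𝕜`-module of the extended tensor product `M ⊗^{X,Y}_{𝕜B} N`. -/
abbrev ExtTen {A B C : Type*} [Group A] [Group B] [Group C]
    {M N : Type*} [AddCommGroup M] [Module 𝕜 M] [AddCommGroup N] [Module 𝕜 N]
    (X : Subgroup (A × B)) (Y : Subgroup (B × C))
    (ρ : Representation 𝕜 ↥X M) (σ : Representation 𝕜 ↥Y N) :=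
  (M ⊗[𝕜] N) ⧸ midRel X Y ρ σ

/-- The canonical projection onto the extended tensor product. -/
def extMk {A B C : Type*} [Group A] [Group B] [Group C]
    {M N : Type*} [AddCommGroup M] [Module 𝕜 M] [AddCommGroup N] [Module 𝕜 N]
    (X : Subgroup (A × B)) (Y : Subgroup (B × C))
    (ρ : Representation 𝕜 ↥X M) (σ : Representation 𝕜 ↥Y N) :
    (M ⊗[𝕜] N) →ₗ[𝕜] ExtTen X Y ρ σ :=
  (midRel X Y ρ σ).mkQ

/-- The `𝕜`-module `LHom^{X,Y}_{𝕜A}(M,N) = Hom_{𝕜[k₁(X)∩k₁(Y)]}(M,N)` of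
`𝕜`-linear maps commuting with the actions of `k₁(X)∩k₁(Y)` (via `(a,1)`). -/
def lHomSub {A B C : Type*} [Group A] [Group B] [Group C]
    {M N : Type*} [AddCommGroup M] [Module 𝕜 M] [AddCommGroup N] [Module 𝕜 N]
    (X : Subgroup (A × B)) (Y : Subgroup (A × C))
    (ρ : Representation 𝕜 ↥X M) (σ : Representation 𝕜 ↥Y N) :
    Submodule 𝕜 (M →ₗ[𝕜] N) where
  carrier := {f | ∀ (a : A) (h1 : ((a, (1 : B)) : A × B) ∈ X)
      (h2 : ((a, (1 : C)) : A × C) ∈ Y) (m : M),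
        f (ρ ⟨(a, 1), h1⟩ m) = σ ⟨(a, 1), h2⟩ (f m)}
  add_mem' := by
    intro f g hf hg a h1 h2 m
    simp only [LinearMap.add_apply, hf a h1 h2 m, hg a h1 h2 m, map_add]
  zero_mem' := by
    intro a h1 h2 m
    simp
  smul_mem' := by
    intro c f hf a h1 h2 m
    simp only [LinearMap.smul_apply, hf a h1 h2 m, map_smul]

/-- The `𝕜`-module `RHom^{X,Y}_{𝕜A}(M,N) = Hom_{𝕜[k₂(X)∩k₂(Y)]}(M,N)` of
`𝕜`-linear maps commuting with the actions of `k₂(X)∩k₂(Y)` (via `(1,a)`). -/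
def rHomSub {A B C : Type*} [Group A] [Group B] [Group C]
    {M N : Type*} [AddCommGroup M] [Module 𝕜 M] [AddCommGroup N] [Module 𝕜 N]
    (X : Subgroup (B × A)) (Y : Subgroup (C × A))
    (ρ : Representation 𝕜 ↥X M) (σ : Representation 𝕜 ↥Y N) :
    Submodule 𝕜 (M →ₗ[𝕜] N) where
  carrier := {f | ∀ (a : A) (h1 : (((1 : B), a) : B × A) ∈ X)
      (h2 : (((1 : C), a) : C × A) ∈ Y) (m : M),
        f (ρ ⟨(1, a), h1⟩ m) = σ ⟨(1, a), h2⟩ (f m)}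
  add_mem' := by
    intro f g hf hg a h1 h2 m
    simp only [LinearMap.add_apply, hf a h1 h2 m, hg a h1 h2 m, map_add]
  zero_mem' := by
    intro a h1 h2 m
    simp
  smul_mem' := by
    intro c f hf a h1 h2 m
    simp only [LinearMap.smul_apply, hf a h1 h2 m, map_smul]

/-- The `𝕜`-module of `𝕜I`-linear maps between two representations of a group
`I`, e.g. `Hom_{𝕜[X*X°]}(-,-)` or `Hom_{𝕜X}(-,-)`. -/
def fullHomSub {I : Type*} [Group I]
    {M N : Type*} [AddCommGroup M] [Module 𝕜 M] [AddCommGroup N] [Module 𝕜 N]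
    (ρ : Representation 𝕜 I M) (σ : Representation 𝕜 I N) :
    Submodule 𝕜 (M →ₗ[𝕜] N) where
  carrier := {f | ∀ (x : I) (m : M), f (ρ x m) = σ x (f m)}
  add_mem' := by
    intro f g hf hg x m
    simp only [LinearMap.add_apply, hf x m, hg x m, map_add]
  zero_mem' := by
    intro x m
    simp
  smul_mem' := by
    intro c f hf x m
    simp only [LinearMap.smul_apply, hf x m, map_smul]

/-- Relations defining the induced module `Ind_{X'}^{X}(M') = 𝕜X ⊗_{𝕜X'} M'`:
spanned by `(b·a) ⊗ m - b ⊗ (a·m)` for `a ∈ X'`, `b ∈ X`. -/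
noncomputable def indRel {I : Type*} [Group I] (X' X : Subgroup I)
    {M' : Type*} [AddCommGroup M'] [Module 𝕜 M']
    (ρ' : Representation 𝕜 ↥X' M') :
    Submodule 𝕜 (MonoidAlgebra 𝕜 ↥X ⊗[𝕜] M') :=
  Submodule.span 𝕜 {z | ∃ (b : ↥X) (a : I) (h1 : a ∈ X') (h2 : a ∈ X) (m : M'),
    z = (MonoidAlgebra.single (b * ⟨a, h2⟩) (1 : 𝕜)) ⊗ₜ[𝕜] m -
        (MonoidAlgebra.single b (1 : 𝕜)) ⊗ₜ[𝕜] (ρ' ⟨a, h1⟩ m)}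

/-- The underlying `𝕜`-module of the induced module `Ind_{X'}^{X}(M')`. -/
abbrev Ind {I : Type*} [Group I] (X' X : Subgroup I)
    {M' : Type*} [AddCommGroup M'] [Module 𝕜 M']
    (ρ' : Representation 𝕜 ↥X' M') :=
  (MonoidAlgebra 𝕜 ↥X ⊗[𝕜] M') ⧸ indRel X' X ρ'

/-- The canonical projection onto the induced module. -/
noncomputable def indMk {I : Type*} [Group I] (X' X : Subgroup I)
    {M' : Type*} [AddCommGroup M'] [Module 𝕜 M']
    (ρ' : Representation 𝕜 ↥X' M') :
    (MonoidAlgebra 𝕜 ↥X ⊗[𝕜] M') →ₗ[𝕜] Ind X' X ρ' :=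
  (indRel X' X ρ').mkQ

end ExtendedTensor

section Homs

variable {G H : Type*} [Group G] [Group H]

lemma k1_prod_mem {X : Subgroup (G × H)} (u : ↥(k1 X)) :
    (((u : G), (1 : H)) : G × H) ∈ X := u.2

lemma k1_inv_prod_mem {X : Subgroup (G × H)} (u : ↥(k1 X)) :
    (((u : G)⁻¹, (1 : H)) : G × H) ∈ X := by
  simpa using X.inv_mem (k1_prod_mem u)

lemma k2_prod_mem {X : Subgroup (G × H)} (u : ↥(k2 X)) :
    (((1 : G), (u : H)) : G × H) ∈ X := u.2

/-- The embedding `k₁(X) →* X`, `u ↦ (u,1)`. -/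
def k1Hom (X : Subgroup (G × H)) : ↥(k1 X) →* ↥X where
  toFun u := ⟨((u : G), (1 : H)), u.2⟩
  map_one' := rfl
  map_mul' u v := Subtype.ext (by simp)

/-- The embedding `k₁(X) →* X°`, `u ↦ (1,u)`, giving the right `𝕜[k₁(X)]`-module
structure (read as a left module) on left `𝕜X°`-modules. -/
def k1HomOp (X : Subgroup (G × H)) : ↥(k1 X) →* ↥(opp X) where
  toFun u := ⟨((1 : H), (u : G)), mem_opp.mpr u.2⟩
  map_one' := rfl
  map_mul' u v := Subtype.ext (by simp)

/-- The embedding `k₂(X) →* X`, `u ↦ (1,u)`. -/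
def k2Hom (X : Subgroup (G × H)) : ↥(k2 X) →* ↥X where
  toFun u := ⟨((1 : G), (u : H)), u.2⟩
  map_one' := rfl
  map_mul' u v := Subtype.ext (by simp)

end Homs


section ProofAux

variable {𝕜 : Type*} [CommRing 𝕜]

lemma indMk_rel {I : Type*} [Group I] (X' X : Subgroup I)
    {M' : Type*} [AddCommGroup M'] [Module 𝕜 M']
    (ρ' : Representation 𝕜 ↥X' M') (b : ↥X) (a : I) (h1 : a ∈ X') (h2 : a ∈ X) (m : M') :
    indMk X' X ρ' (MonoidAlgebra.single (b * ⟨a, h2⟩) (1:𝕜) ⊗ₜ[𝕜] m) =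
      indMk X' X ρ' (MonoidAlgebra.single b (1:𝕜) ⊗ₜ[𝕜] (ρ' ⟨a, h1⟩ m)) := by
  rw [indMk, Submodule.mkQ_apply, Submodule.mkQ_apply, Submodule.Quotient.eq]
  exact Submodule.subset_span ⟨b, a, h1, h2, m, rfl⟩

lemma extMk_rel {A B C : Type*} [Group A] [Group B] [Group C]
    {M N : Type*} [AddCommGroup M] [Module 𝕜 M] [AddCommGroup N] [Module 𝕜 N]
    (X : Subgroup (A × B)) (Y : Subgroup (B × C))
    (ρ : Representation 𝕜 ↥X M) (σ : Representation 𝕜 ↥Y N)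
    (b : B) (h1 : (((1:A), b⁻¹) : A × B) ∈ X) (h2 : ((b, (1:C)) : B × C) ∈ Y)
    (m : M) (n : N) :
    extMk X Y ρ σ ((ρ ⟨((1:A), b⁻¹), h1⟩ m) ⊗ₜ[𝕜] n) =
      extMk X Y ρ σ (m ⊗ₜ[𝕜] (σ ⟨(b, (1:C)), h2⟩ n)) := by
  rw [extMk, Submodule.mkQ_apply, Submodule.mkQ_apply, Submodule.Quotient.eq]
  exact Submodule.subset_span ⟨b, h1, h2, m, n, rfl⟩

lemma ind_hom_ext {I : Type*} [Group I] {X' X : Subgroup I}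
    {M' : Type*} [AddCommGroup M'] [Module 𝕜 M']
    {ρ' : Representation 𝕜 ↥X' M'} {P : Type*} [AddCommGroup P] [Module 𝕜 P]
    {F G : Ind X' X ρ' →ₗ[𝕜] P}
    (h : ∀ (b : ↥X) (m : M'),
      F (indMk X' X ρ' (MonoidAlgebra.single b (1:𝕜) ⊗ₜ[𝕜] m)) =
      G (indMk X' X ρ' (MonoidAlgebra.single b (1:𝕜) ⊗ₜ[𝕜] m))) : F = G := by
  apply Submodule.linearMap_qext
  apply TensorProduct.ext
  apply MonoidAlgebra.lhom_ext'
  intro b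
  apply LinearMap.ext_ring
  apply LinearMap.ext
  intro m
  simpa [indMk] using h b m

lemma ext_hom_ext {A B C : Type*} [Group A] [Group B] [Group C]
    {M N : Type*} [AddCommGroup M] [Module 𝕜 M] [AddCommGroup N] [Module 𝕜 N]
    {X : Subgroup (A × B)} {Y : Subgroup (B × C)}
    {ρ : Representation 𝕜 ↥X M} {σ : Representation 𝕜 ↥Y N}
    {P : Type*} [AddCommGroup P] [Module 𝕜 P]
    {F G : ExtTen X Y ρ σ →ₗ[𝕜] P}
    (h : ∀ m n, F (extMk X Y ρ σ (m ⊗ₜ[𝕜] n)) = G (extMk X Y ρ σ (m ⊗ₜ[𝕜] n))) : F = G := by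
  apply Submodule.linearMap_qext
  apply TensorProduct.ext'
  intro m n
  simpa [extMk] using h m n

end ProofAux

set_option maxHeartbeats 1000000 in
/-- There is a natural `𝕜[X*Y]`-module homomorphism
`α₁ : Ind_{X'*Y}^{X*Y}(M' ⊗^{X',Y}_{𝕜H} N) → Ind_{X'}^{X}(M') ⊗^{X,Y}_{𝕜H} N`,
`(g,k)⊗(m'⊗n) ↦ ((g,h)⊗m') ⊗ (h,k)n`, and if `p₂(X) ≤ p₁(Y)` then `α₁` is an
isomorphism. -/
theorem stmt9 {𝕜 : Type*} [CommRing 𝕜]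
    {G H K : Type*} [Group G] [Group H] [Group K] [Finite G] [Finite H] [Finite K]
    (X' X : Subgroup (G × H)) (hX'X : X' ≤ X) (Y : Subgroup (H × K))
    {M' N : Type*} [AddCommGroup M'] [Module 𝕜 M'] [AddCommGroup N] [Module 𝕜 N]
    (ρM' : Representation 𝕜 ↥X' M') (ρN : Representation 𝕜 ↥Y N)
    -- the `𝕜[X'*Y]`-module structure on `M' ⊗^{X',Y}_{𝕜H} N`
    (ρT₁ : Representation 𝕜 ↥(comp X' Y) (ExtTen X' Y ρM' ρN))
    (hρT₁ : ∀ (g : G) (k : K) (hgk : (g, k) ∈ comp X' Y) (h : H)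
      (h1 : (g, h) ∈ X') (h2 : (h, k) ∈ Y) (m : M') (n : N),
      ρT₁ ⟨(g, k), hgk⟩ (extMk X' Y ρM' ρN (m ⊗ₜ[𝕜] n)) =
        extMk X' Y ρM' ρN ((ρM' ⟨(g, h), h1⟩ m) ⊗ₜ[𝕜] (ρN ⟨(h, k), h2⟩ n)))
    -- the `𝕜[X*Y]`-module structure on `Ind_{X'*Y}^{X*Y}(M' ⊗^{X',Y} N)`
    (ρS : Representation 𝕜 ↥(comp X Y) (Ind (comp X' Y) (comp X Y) ρT₁))
    (hρS : ∀ (x b : ↥(comp X Y)) (t : ExtTen X' Y ρM' ρN),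
      ρS x (indMk (comp X' Y) (comp X Y) ρT₁ ((MonoidAlgebra.single b (1 : 𝕜)) ⊗ₜ[𝕜] t)) =
        indMk (comp X' Y) (comp X Y) ρT₁ ((MonoidAlgebra.single (x * b) (1 : 𝕜)) ⊗ₜ[𝕜] t))
    -- the `𝕜X`-module structure on `Ind_{X'}^{X}(M')`
    (ρI : Representation 𝕜 ↥X (Ind X' X ρM'))
    (hρI : ∀ (x b : ↥X) (m : M'),
      ρI x (indMk X' X ρM' ((MonoidAlgebra.single b (1 : 𝕜)) ⊗ₜ[𝕜] m)) =
        indMk X' X ρM' ((MonoidAlgebra.single (x * b) (1 : 𝕜)) ⊗ₜ[𝕜] m))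
    -- the `𝕜[X*Y]`-module structure on `Ind_{X'}^{X}(M') ⊗^{X,Y}_{𝕜H} N`
    (ρT₂ : Representation 𝕜 ↥(comp X Y) (ExtTen X Y ρI ρN))
    (hρT₂ : ∀ (g : G) (k : K) (hgk : (g, k) ∈ comp X Y) (h : H)
      (h1 : (g, h) ∈ X) (h2 : (h, k) ∈ Y) (u : Ind X' X ρM') (n : N),
      ρT₂ ⟨(g, k), hgk⟩ (extMk X Y ρI ρN (u ⊗ₜ[𝕜] n)) =
        extMk X Y ρI ρN ((ρI ⟨(g, h), h1⟩ u) ⊗ₜ[𝕜] (ρN ⟨(h, k), h2⟩ n))) :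
    ∃ α : Ind (comp X' Y) (comp X Y) ρT₁ →ₗ[𝕜] ExtTen X Y ρI ρN,
      (∀ (g : G) (k : K) (hgk : (g, k) ∈ comp X Y) (h : H)
        (h1 : (g, h) ∈ X) (h2 : (h, k) ∈ Y) (m : M') (n : N),
        α (indMk (comp X' Y) (comp X Y) ρT₁
            ((MonoidAlgebra.single (⟨(g, k), hgk⟩ : ↥(comp X Y)) (1 : 𝕜)) ⊗ₜ[𝕜]
              (extMk X' Y ρM' ρN (m ⊗ₜ[𝕜] n)))) =
          extMk X Y ρI ρN
            ((indMk X' X ρM' ((MonoidAlgebra.single (⟨(g, h), h1⟩ : ↥X) (1 : 𝕜)) ⊗ₜ[𝕜] m))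
              ⊗ₜ[𝕜] (ρN ⟨(h, k), h2⟩ n))) ∧
      (∀ (x : ↥(comp X Y)) (u : Ind (comp X' Y) (comp X Y) ρT₁),
        α (ρS x u) = ρT₂ x (α u)) ∧
      (p2 X ≤ p1 Y → Function.Bijective α) := by
  classical
  -- the map m ↦ 1 ⊗ m into the induced module
  let j : M' →ₗ[𝕜] Ind X' X ρM' :=
    (indMk X' X ρM') ∘ₗ
      ((TensorProduct.mk 𝕜 (MonoidAlgebra 𝕜 ↥X) M') (MonoidAlgebra.single 1 1))
  let b1 : (M' ⊗[𝕜] N) →ₗ[𝕜] ExtTen X Y ρI ρN :=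
    (extMk X Y ρI ρN) ∘ₗ (TensorProduct.map j LinearMap.id)
  have hb1 : ∀ (m : M') (n : N), b1 (m ⊗ₜ[𝕜] n) =
      extMk X Y ρI ρN
        ((indMk X' X ρM' ((MonoidAlgebra.single (1:↥X) (1:𝕜)) ⊗ₜ[𝕜] m)) ⊗ₜ[𝕜] n) := by
    intro m n
    simp [b1, j]
  -- key commutation: 1 ⊗ (a·m) = a·(1 ⊗ m) in Ind_{X'}^X M'
  have key : ∀ (p : G × H) (hp' : p ∈ X') (hpX : p ∈ X) (m : M'),
      indMk X' X ρM' ((MonoidAlgebra.single (1:↥X) (1:𝕜)) ⊗ₜ[𝕜] (ρM' ⟨p, hp'⟩ m)) =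
      ρI ⟨p, hpX⟩ (indMk X' X ρM' ((MonoidAlgebra.single (1:↥X) (1:𝕜)) ⊗ₜ[𝕜] m)) := by
    intro p hp' hpX m
    rw [hρI, mul_one, ← indMk_rel X' X ρM' 1 p hp' hpX m, one_mul]
  have hβcond : midRel X' Y ρM' ρN ≤ LinearMap.ker b1 := by
    rw [midRel, Submodule.span_le]
    rintro z ⟨b, h1, h2, m, n, rfl⟩
    simp only [SetLike.mem_coe, LinearMap.mem_ker, map_sub, sub_eq_zero]
    rw [hb1, hb1, key ((1:G), b⁻¹) h1 (hX'X h1) m]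
    exact extMk_rel X Y ρI ρN b (hX'X h1) h2 _ n
  let β : ExtTen X' Y ρM' ρN →ₗ[𝕜] ExtTen X Y ρI ρN :=
    Submodule.liftQ _ b1 hβcond
  have hβ : ∀ (m : M') (n : N), β (extMk X' Y ρM' ρN (m ⊗ₜ[𝕜] n)) =
      extMk X Y ρI ρN
        ((indMk X' X ρM' ((MonoidAlgebra.single (1:↥X) (1:𝕜)) ⊗ₜ[𝕜] m)) ⊗ₜ[𝕜] n) := by
    intro m n
    rw [← hb1]
    simp only [β, extMk, Submodule.mkQ_apply, Submodule.liftQ_apply]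
  -- β is equivariant
  have hβeq : ∀ (a : G × K) (ha' : a ∈ comp X' Y) (ha : a ∈ comp X Y),
      β ∘ₗ (ρT₁ ⟨a, ha'⟩) = (ρT₂ ⟨a, ha⟩) ∘ₗ β := by
    rintro ⟨g, k⟩ ha' ha
    obtain ⟨h, hh1, hh2⟩ := ha'
    apply ext_hom_ext
    intro m n
    simp only [LinearMap.comp_apply]
    rw [hρT₁ g k ⟨h, hh1, hh2⟩ h hh1 hh2 m n, hβ, hβ,
      hρT₂ g k ha h (hX'X hh1) hh2 _ n, key (g, h) hh1 (hX'X hh1) m]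
  let L : MonoidAlgebra 𝕜 ↥(comp X Y) →ₗ[𝕜]
      (ExtTen X' Y ρM' ρN →ₗ[𝕜] ExtTen X Y ρI ρN) :=
    Finsupp.lsum 𝕜 (fun x => LinearMap.toSpanSingleton 𝕜 _ ((ρT₂ x) ∘ₗ β)) ∘ₗ
      (MonoidAlgebra.coeffLinearEquiv 𝕜).toLinearMap
  let α' := TensorProduct.lift L
  have hα' : ∀ (x : ↥(comp X Y)) (t : ExtTen X' Y ρM' ρN),
      α' ((MonoidAlgebra.single x (1:𝕜)) ⊗ₜ[𝕜] t) = ρT₂ x (β t) := by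
    intro x t
    rw [show α' ((MonoidAlgebra.single x (1:𝕜)) ⊗ₜ[𝕜] t) = (L (MonoidAlgebra.single x 1)) t
      from TensorProduct.lift.tmul _ _]
    show ((Finsupp.lsum 𝕜 (fun y => LinearMap.toSpanSingleton 𝕜
        (ExtTen X' Y ρM' ρN →ₗ[𝕜] ExtTen X Y ρI ρN) ((ρT₂ y) ∘ₗ β)))
        (Finsupp.single x (1:𝕜))) t = ρT₂ x (β t)
    rw [Finsupp.lsum_single, LinearMap.toSpanSingleton_apply, one_smul, LinearMap.comp_apply]
  have hαcond : indRel (comp X' Y) (comp X Y) ρT₁ ≤ LinearMap.ker α' := by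
    rw [indRel, Submodule.span_le]
    rintro z ⟨b, a, h1, h2, t, rfl⟩
    simp only [SetLike.mem_coe, LinearMap.mem_ker, map_sub, sub_eq_zero]
    rw [hα', hα', MonoidHom.map_mul ρT₂ b ⟨a, h2⟩, Module.End.mul_apply,
      ← LinearMap.comp_apply (ρT₂ ⟨a, h2⟩) β t, ← hβeq a h1 h2, LinearMap.comp_apply]
  let α : Ind (comp X' Y) (comp X Y) ρT₁ →ₗ[𝕜] ExtTen X Y ρI ρN :=
    Submodule.liftQ _ α' hαcond
  have hα : ∀ (b : ↥(comp X Y)) (t : ExtTen X' Y ρM' ρN),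
      α (indMk (comp X' Y) (comp X Y) ρT₁ ((MonoidAlgebra.single b (1:𝕜)) ⊗ₜ[𝕜] t)) =
        ρT₂ b (β t) := by
    intro b t
    rw [← hα' b t]
    simp only [α, indMk, Submodule.mkQ_apply, Submodule.liftQ_apply]
  have prop1 : ∀ (g : G) (k : K) (hgk : (g, k) ∈ comp X Y) (h : H)
      (h1 : (g, h) ∈ X) (h2 : (h, k) ∈ Y) (m : M') (n : N),
      α (indMk (comp X' Y) (comp X Y) ρT₁
          ((MonoidAlgebra.single (⟨(g, k), hgk⟩ : ↥(comp X Y)) (1 : 𝕜)) ⊗ₜ[𝕜]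
            (extMk X' Y ρM' ρN (m ⊗ₜ[𝕜] n)))) =
        extMk X Y ρI ρN
          ((indMk X' X ρM' ((MonoidAlgebra.single (⟨(g, h), h1⟩ : ↥X) (1 : 𝕜)) ⊗ₜ[𝕜] m))
            ⊗ₜ[𝕜] (ρN ⟨(h, k), h2⟩ n)) := by
    intro g k hgk h h1 h2 m n
    rw [hα, hβ, hρT₂ g k hgk h h1 h2 _ n, hρI, mul_one]
  have prop2 : ∀ (x : ↥(comp X Y)) (u : Ind (comp X' Y) (comp X Y) ρT₁),
      α (ρS x u) = ρT₂ x (α u) := by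
    intro x u
    have hcomp : α ∘ₗ (ρS x) = (ρT₂ x) ∘ₗ α := by
      apply ind_hom_ext
      intro b t
      simp only [LinearMap.comp_apply]
      rw [hρS, hα, hα, MonoidHom.map_mul ρT₂ x b, Module.End.mul_apply]
    exact LinearMap.ext_iff.mp hcomp u
  refine ⟨α, prop1, prop2, ?_⟩
  intro hp
  -- choose, for each x ∈ X, some k with (x₂, k) ∈ Y
  have hex : ∀ x : ↥X, ∃ kv : K, (((x : G × H).2, kv) : H × K) ∈ Y := by
    intro x
    have hx2 : (x : G × H).2 ∈ p2 X := Subgroup.mem_map.mpr ⟨(x : G × H), x.2, rfl⟩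
    obtain ⟨yk, hyk, hy1⟩ := Subgroup.mem_map.mp (hp hx2)
    exact ⟨yk.2, by rw [← hy1]; exact hyk⟩
  choose kk hkk using hex
  have hcx : ∀ x : ↥X, (((x : G × H).1, kk x) : G × K) ∈ comp X Y :=
    fun x => ⟨(x : G × H).2, x.2, hkk x⟩
  have hcollapse : ∀ (u v : ↥Y) (n : N), ρN u (ρN v n) = ρN (u * v) n := by
    intro u v n
    rw [map_mul, Module.End.mul_apply]
  have h1M : (⟨((1:G), (1:H)), X'.one_mem⟩ : ↥X') = 1 := rfl
  -- the inverse map on generators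
  let Φ : ↥X → (M' →ₗ[𝕜] N →ₗ[𝕜] Ind (comp X' Y) (comp X Y) ρT₁) := fun x =>
    TensorProduct.curry
      ((((indMk (comp X' Y) (comp X Y) ρT₁) ∘ₗ
        ((TensorProduct.mk 𝕜 (MonoidAlgebra 𝕜 ↥(comp X Y)) (ExtTen X' Y ρM' ρN))
          (MonoidAlgebra.single (⟨((x : G × H).1, kk x), hcx x⟩ : ↥(comp X Y)) (1:𝕜)))) ∘ₗ
        (extMk X' Y ρM' ρN)) ∘ₗ
        (TensorProduct.map LinearMap.id (ρN ((⟨((x : G × H).2, kk x), hkk x⟩ : ↥Y)⁻¹))))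
  have hΦ : ∀ (x : ↥X) (m' : M') (n : N),
      Φ x m' n = indMk (comp X' Y) (comp X Y) ρT₁
        ((MonoidAlgebra.single (⟨((x : G × H).1, kk x), hcx x⟩ : ↥(comp X Y)) (1:𝕜)) ⊗ₜ[𝕜]
          (extMk X' Y ρM' ρN (m' ⊗ₜ[𝕜]
            (ρN ((⟨((x : G × H).2, kk x), hkk x⟩ : ↥Y)⁻¹) n)))) := by
    intro x m' n
    simp [Φ]
  let L2 : MonoidAlgebra 𝕜 ↥X →ₗ[𝕜]
      (M' →ₗ[𝕜] N →ₗ[𝕜] Ind (comp X' Y) (comp X Y) ρT₁) :=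
    Finsupp.lsum 𝕜 (fun x => LinearMap.toSpanSingleton 𝕜 _ (Φ x)) ∘ₗ
      (MonoidAlgebra.coeffLinearEquiv 𝕜).toLinearMap
  let Γ₃ := TensorProduct.lift L2
  have hΓ₃ : ∀ (x : ↥X) (m' : M'),
      Γ₃ ((MonoidAlgebra.single x (1:𝕜)) ⊗ₜ[𝕜] m') = Φ x m' := by
    intro x m'
    rw [show Γ₃ ((MonoidAlgebra.single x (1:𝕜)) ⊗ₜ[𝕜] m') = (L2 (MonoidAlgebra.single x 1)) m'
      from TensorProduct.lift.tmul _ _]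
    show ((Finsupp.lsum 𝕜 (fun y => LinearMap.toSpanSingleton 𝕜
        (M' →ₗ[𝕜] N →ₗ[𝕜] Ind (comp X' Y) (comp X Y) ρT₁) (Φ y)))
        (Finsupp.single x (1:𝕜))) m' = Φ x m'
    rw [Finsupp.lsum_single, LinearMap.toSpanSingleton_apply, one_smul]
  have hΓ₃cond : indRel X' X ρM' ≤ LinearMap.ker Γ₃ := by
    rw [indRel, Submodule.span_le]
    rintro z ⟨b, a, h1, h2, m, rfl⟩
    obtain ⟨g₀, h₀⟩ := a
    simp only [SetLike.mem_coe, LinearMap.mem_ker, map_sub, sub_eq_zero]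
    rw [hΓ₃, hΓ₃]
    apply LinearMap.ext
    intro n
    rw [hΦ, hΦ]
    set x₁ : ↥X := b * ⟨(g₀, h₀), h2⟩ with hx₁
    have hYa : ((h₀, (kk b)⁻¹ * kk x₁) : H × K) ∈ Y := by
      have hm := Y.mul_mem (Y.inv_mem (hkk b)) (hkk x₁)
      simpa [hx₁] using hm
    have hSa' : ((g₀, (kk b)⁻¹ * kk x₁) : G × K) ∈ comp X' Y := ⟨h₀, h1, hYa⟩
    have hSa : ((g₀, (kk b)⁻¹ * kk x₁) : G × K) ∈ comp X Y := ⟨h₀, hX'X h1, hYa⟩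
    have hmulS : (⟨((b : G × H).1, kk b), hcx b⟩ : ↥(comp X Y)) *
        ⟨(g₀, (kk b)⁻¹ * kk x₁), hSa⟩ = ⟨((x₁ : G × H).1, kk x₁), hcx x₁⟩ := by
      apply Subtype.ext
      simp [hx₁]
    have hw : (⟨(h₀, (kk b)⁻¹ * kk x₁), hYa⟩ : ↥Y) *
        (⟨((x₁ : G × H).2, kk x₁), hkk x₁⟩ : ↥Y)⁻¹ =
        (⟨((b : G × H).2, kk b), hkk b⟩ : ↥Y)⁻¹ := by
      apply Subtype.ext
      simp [hx₁, Prod.ext_iff, mul_assoc]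
    rw [← hmulS, indMk_rel (comp X' Y) (comp X Y) ρT₁ _ _ hSa' hSa,
      hρT₁ g₀ ((kk b)⁻¹ * kk x₁) hSa' h₀ h1 hYa, hcollapse, hw]
  let Γ₂ : Ind X' X ρM' →ₗ[𝕜] (N →ₗ[𝕜] Ind (comp X' Y) (comp X Y) ρT₁) :=
    Submodule.liftQ _ Γ₃ hΓ₃cond
  have hΓ₂ : ∀ (x : ↥X) (m' : M'),
      Γ₂ (indMk X' X ρM' ((MonoidAlgebra.single x (1:𝕜)) ⊗ₜ[𝕜] m')) = Φ x m' := by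
    intro x m'
    rw [← hΓ₃ x m']
    simp only [Γ₂, indMk, Submodule.mkQ_apply, Submodule.liftQ_apply]
  let Γ := TensorProduct.lift Γ₂
  have hB : ∀ (bH : H) (hb1 : (((1:G), bH⁻¹) : G × H) ∈ X)
      (hb2 : ((bH, (1:K)) : H × K) ∈ Y) (u : Ind X' X ρM') (n : N),
      Γ₂ (ρI ⟨((1:G), bH⁻¹), hb1⟩ u) n = Γ₂ u (ρN ⟨(bH, (1:K)), hb2⟩ n) := by
    intro bH hb1 hb2 u n
    have hcomp : Γ₂ ∘ₗ (ρI ⟨((1:G), bH⁻¹), hb1⟩) =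
        (LinearMap.lcomp 𝕜 _ (ρN ⟨(bH, (1:K)), hb2⟩)) ∘ₗ Γ₂ := by
      apply ind_hom_ext
      intro x m'
      simp only [LinearMap.comp_apply]
      rw [hρI, hΓ₂, hΓ₂]
      apply LinearMap.ext
      intro n0
      rw [LinearMap.lcomp_apply, hΦ, hΦ]
      set zx : ↥X := (⟨((1:G), bH⁻¹), hb1⟩ : ↥X) * x with hzx
      have hY0 : (((1:H), (kk zx)⁻¹ * kk x) : H × K) ∈ Y := by
        have hm := Y.mul_mem (Y.mul_mem (Y.inv_mem (hkk zx)) (Y.inv_mem hb2)) (hkk x)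
        simpa [hzx, mul_assoc] using hm
      have hS0' : (((1:G), (kk zx)⁻¹ * kk x) : G × K) ∈ comp X' Y :=
        ⟨1, X'.one_mem, hY0⟩
      have hS0 : (((1:G), (kk zx)⁻¹ * kk x) : G × K) ∈ comp X Y :=
        ⟨1, X.one_mem, hY0⟩
      have hmul2 : (⟨((zx : G × H).1, kk zx), hcx zx⟩ : ↥(comp X Y)) *
          ⟨((1:G), (kk zx)⁻¹ * kk x), hS0⟩ = ⟨((x : G × H).1, kk x), hcx x⟩ := by
        apply Subtype.ext
        simp [hzx]
      have hw2 : (⟨((1:H), (kk zx)⁻¹ * kk x), hY0⟩ : ↥Y) *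
          (⟨((x : G × H).2, kk x), hkk x⟩ : ↥Y)⁻¹ * ⟨(bH, (1:K)), hb2⟩ =
          (⟨((zx : G × H).2, kk zx), hkk zx⟩ : ↥Y)⁻¹ := by
        apply Subtype.ext
        simp [hzx, Prod.ext_iff, mul_assoc]
      rw [← hmul2, indMk_rel (comp X' Y) (comp X Y) ρT₁ _ _ hS0' hS0,
        hρT₁ 1 ((kk zx)⁻¹ * kk x) hS0' 1 X'.one_mem hY0, h1M, map_one,
        Module.End.one_apply, hcollapse, hcollapse, hw2]
    have := LinearMap.ext_iff.mp hcomp u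
    simp only [LinearMap.comp_apply, LinearMap.lcomp_apply] at this
    rw [this]
    rfl
  have hΓcond : midRel X Y ρI ρN ≤ LinearMap.ker Γ := by
    rw [midRel, Submodule.span_le]
    rintro z ⟨bH, hb1, hb2, u, n, rfl⟩
    simp only [SetLike.mem_coe, LinearMap.mem_ker, map_sub, sub_eq_zero]
    rw [show Γ ((ρI ⟨((1:G), bH⁻¹), hb1⟩ u) ⊗ₜ[𝕜] n) =
        Γ₂ (ρI ⟨((1:G), bH⁻¹), hb1⟩ u) n from TensorProduct.lift.tmul _ _,
      show Γ (u ⊗ₜ[𝕜] (ρN ⟨(bH, (1:K)), hb2⟩ n)) =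
        Γ₂ u (ρN ⟨(bH, (1:K)), hb2⟩ n) from TensorProduct.lift.tmul _ _]
    exact hB bH hb1 hb2 u n
  let γ : ExtTen X Y ρI ρN →ₗ[𝕜] Ind (comp X' Y) (comp X Y) ρT₁ :=
    Submodule.liftQ _ Γ hΓcond
  have hγ' : ∀ (u : Ind X' X ρM') (n : N),
      γ (extMk X Y ρI ρN (u ⊗ₜ[𝕜] n)) = Γ₂ u n := by
    intro u n
    rw [show Γ₂ u n = Γ (u ⊗ₜ[𝕜] n) from (TensorProduct.lift.tmul _ _).symm]
    simp only [γ, extMk, Submodule.mkQ_apply, Submodule.liftQ_apply]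
  -- γ is a left inverse of α
  have hleft : γ ∘ₗ α = LinearMap.id := by
    apply ind_hom_ext
    intro b t
    obtain ⟨⟨bg, bk⟩, hbp⟩ := b
    simp only [LinearMap.comp_apply, LinearMap.id_apply]
    rw [hα]
    have hcomp2 : γ ∘ₗ (ρT₂ (⟨(bg, bk), hbp⟩ : ↥(comp X Y))) ∘ₗ β = (indMk (comp X' Y) (comp X Y) ρT₁) ∘ₗ
        ((TensorProduct.mk 𝕜 (MonoidAlgebra 𝕜 ↥(comp X Y)) (ExtTen X' Y ρM' ρN))
          (MonoidAlgebra.single (⟨(bg, bk), hbp⟩ : ↥(comp X Y)) (1:𝕜))) := by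
      apply ext_hom_ext
      intro m n
      simp only [LinearMap.comp_apply, TensorProduct.mk_apply]
      obtain ⟨h, hh1, hh2⟩ := id hbp
      rw [hβ m n, hρT₂ bg bk hbp h hh1 hh2 _ n, hρI, mul_one]
      set xh : ↥X := ⟨(bg, h), hh1⟩ with hxh
      rw [hγ', hΓ₂, hΦ]
      have hY1 : (((1:H), (kk xh)⁻¹ * bk) : H × K) ∈ Y := by
        have hm := Y.mul_mem (Y.inv_mem (hkk xh)) hh2
        simpa [hxh] using hm
      have hS1' : (((1:G), (kk xh)⁻¹ * bk) : G × K) ∈ comp X' Y :=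
        ⟨1, X'.one_mem, hY1⟩
      have hS1 : (((1:G), (kk xh)⁻¹ * bk) : G × K) ∈ comp X Y :=
        ⟨1, X.one_mem, hY1⟩
      have hmul3 : (⟨((xh : G × H).1, kk xh), hcx xh⟩ : ↥(comp X Y)) *
          ⟨((1:G), (kk xh)⁻¹ * bk), hS1⟩ = ⟨(bg, bk), hbp⟩ := by
        apply Subtype.ext
        simp [hxh]
      have hw3 : (⟨((xh : G × H).2, kk xh), hkk xh⟩ : ↥Y)⁻¹ *
          ⟨(h, bk), hh2⟩ =
          ⟨((1:H), (kk xh)⁻¹ * bk), hY1⟩ := by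
        apply Subtype.ext
        simp [hxh, Prod.ext_iff]
      rw [← hmul3, indMk_rel (comp X' Y) (comp X Y) ρT₁ _ _ hS1' hS1,
        hρT₁ 1 ((kk xh)⁻¹ * bk) hS1' 1 X'.one_mem hY1, h1M, map_one,
        Module.End.one_apply, hcollapse, hw3]
    exact LinearMap.ext_iff.mp hcomp2 t
  -- γ is a right inverse of α
  have hright : α ∘ₗ γ = LinearMap.id := by
    apply ext_hom_ext
    intro u n
    simp only [LinearMap.comp_apply, LinearMap.id_apply]
    have hcomp3 : (α ∘ₗ γ) ∘ₗ (extMk X Y ρI ρN) ∘ₗ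
        ((TensorProduct.mk 𝕜 (Ind X' X ρM') N).flip n) =
        (extMk X Y ρI ρN) ∘ₗ ((TensorProduct.mk 𝕜 (Ind X' X ρM') N).flip n) := by
      apply ind_hom_ext
      intro x m'
      simp only [LinearMap.comp_apply, LinearMap.flip_apply, TensorProduct.mk_apply]
      rw [hγ', hΓ₂, hΦ,
        prop1 (x : G × H).1 (kk x) (hcx x) (x : G × H).2 x.2 (hkk x) m' _,
        hcollapse, mul_inv_cancel, map_one, Module.End.one_apply]
    have := LinearMap.ext_iff.mp hcomp3 u
    simpa only [LinearMap.comp_apply, LinearMap.flip_apply, TensorProduct.mk_apply]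
      using this
  exact Function.bijective_iff_has_inverse.mpr
    ⟨γ, fun u => LinearMap.ext_iff.mp hleft u, fun v => LinearMap.ext_iff.mp hright v⟩

end Stmt9
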